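/- Let A ∈ SL(2,ℤ) with tr A > 2. For every automorphism φ of Γ_A = ℤ² ⋊_A ℤ, the Reidemeister number R(φ ∘ φ) of the square of φ is infinite. (Consequently the Reidemeister zeta function is not defined for any automorphism of Γ_A.) -/

import Mathlib

/-- Two elements `x, y` of a group `G` are `φ`-twisted conjugate if
`y = g * x * (φ g)⁻¹` for some `g : G`. -/
def twistedConj {G : Type*} [Group G] (φ : G →* G) (x y : G) : Prop :=
  ∃ g : G, y = g * x * (φ g)⁻¹

/-- The Reidemeister number of `φ` : the cardinality of the set of
`φ`-twisted conjugacy classes. -/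
noncomputable def reidemeisterNumber {G : Type*} [Group G] (φ : G →* G) : Cardinal :=
  Cardinal.mk (Quot (twistedConj φ))

/-- The additive automorphism of `ℤ²` given by an invertible `2 × 2` integer matrix. -/
def mulVecAut (U : (Matrix (Fin 2) (Fin 2) ℤ)ˣ) : AddAut (Fin 2 → ℤ) where
  toFun v := (U : Matrix (Fin 2) (Fin 2) ℤ).mulVec v
  invFun v := ((U⁻¹ : (Matrix (Fin 2) (Fin 2) ℤ)ˣ) : Matrix (Fin 2) (Fin 2) ℤ).mulVec v
  left_inv v := by
    simp only [Matrix.mulVec_mulVec, Units.inv_mul, Units.mul_inv, Matrix.one_mulVec]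
  right_inv v := by
    simp only [Matrix.mulVec_mulVec, Units.inv_mul, Units.mul_inv, Matrix.one_mulVec]
  map_add' v w := Matrix.mulVec_add _ v w

/-- The semidirect product `ℤ² ⋊_U ℤ`, where `(x, m) * (y, n) = (x + U^m y, m + n)`. -/
abbrev GammaGrp (U : (Matrix (Fin 2) (Fin 2) ℤ)ˣ) :=
  SemidirectProduct (Multiplicative (Fin 2 → ℤ)) (Multiplicative ℤ)
    (zpowersHom (MulAut (Multiplicative (Fin 2 → ℤ)))
      (AddEquiv.toMultiplicative (mulVecAut U)))

open SemidirectProduct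

lemma hom_vanish_on_inl (U : (Matrix (Fin 2) (Fin 2) ℤ)ˣ)
    (hdet : (U : Matrix (Fin 2) (Fin 2) ℤ).det = 1)
    (htr : 2 < (U : Matrix (Fin 2) (Fin 2) ℤ).trace)
    (f : GammaGrp U →* Multiplicative ℤ) (x : Multiplicative (Fin 2 → ℤ)) :
    f (inl x) = 1 := by
  set A : Matrix (Fin 2) (Fin 2) ℤ := (U : Matrix (Fin 2) (Fin 2) ℤ)
  -- additive version
  have hadd : ∀ v w : Fin 2 → ℤ,
      (f (inl (Multiplicative.ofAdd (v + w)))).toAdd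
        = (f (inl (Multiplicative.ofAdd v))).toAdd + (f (inl (Multiplicative.ofAdd w))).toAdd := by
    intro v w
    rw [ofAdd_add, map_mul, map_mul]
    rfl
  set g : (Fin 2 → ℤ) →+ ℤ :=
    AddMonoidHom.mk' (fun v => (f (inl (Multiplicative.ofAdd v))).toAdd) hadd with hg
  -- invariance under A
  have hinv : ∀ v : Fin 2 → ℤ, g (A.mulVec v) = g v := by
    intro v
    have h1 : (inl (Multiplicative.ofAdd (A.mulVec v)) : GammaGrp U)
        = inr (Multiplicative.ofAdd (1 : ℤ)) * inl (Multiplicative.ofAdd v)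
          * inr (Multiplicative.ofAdd (1 : ℤ))⁻¹ := by
      rw [← inl_aut]
      congr 1
    have := congrArg f h1
    simp only [map_mul, map_inv] at this
    have : f (inl (Multiplicative.ofAdd (A.mulVec v))) = f (inl (Multiplicative.ofAdd v)) := by
      rw [this, mul_comm (f (inr (Multiplicative.ofAdd (1:ℤ))))]
      rw [mul_assoc, mul_inv_cancel, mul_one]
    simpa [hg, AddMonoidHom.mk'_apply] using congrArg Multiplicative.toAdd this
  -- vanish on (A - 1) image
  have hker : ∀ v : Fin 2 → ℤ, g ((A - 1).mulVec v) = 0 := by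
    intro v
    have : (A - 1).mulVec v = A.mulVec v - v := by
      simp [Matrix.sub_mulVec]
    rw [this, map_sub, hinv, sub_self]
  have hd : (A - 1).det ≠ 0 := by
    have h2 : (A - 1).det = A.det - A.trace + 1 := by
      simp [Matrix.det_fin_two, Matrix.trace_fin_two, Matrix.sub_apply, Matrix.one_apply]
      ring
    rw [h2, hdet]
    omega
  -- conclude
  have hv : ∀ v : Fin 2 → ℤ, g v = 0 := by
    intro v
    have key : (A - 1).mulVec ((A - 1).adjugate.mulVec v) = (A - 1).det • v := by
      rw [Matrix.mulVec_mulVec, Matrix.mul_adjugate]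
      simp [Matrix.smul_mulVec]
    have := hker ((A - 1).adjugate.mulVec v)
    rw [key, map_zsmul] at this
    exact (smul_eq_zero.mp this).resolve_left hd
  have := hv x.toAdd
  simp only [hg, AddMonoidHom.mk'_apply] at this
  have : f (inl (Multiplicative.ofAdd x.toAdd)) = Multiplicative.ofAdd 0 := by
    rw [← this]; rfl
  simpa using this

lemma induced_rightHom (U : (Matrix (Fin 2) (Fin 2) ℤ)ˣ)
    (θ : GammaGrp U →* GammaGrp U)
    (h0 : ∀ x, rightHom (θ (inl x)) = 1) (g : GammaGrp U) :
    rightHom (θ g) = (rightHom (θ (inr (Multiplicative.ofAdd 1)))) ^ (rightHom g).toAdd := by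
  conv_lhs => rw [← inl_left_mul_inr_right g]
  rw [map_mul, map_mul, h0, one_mul]
  have h1 : (inr g.right : GammaGrp U) = (inr (Multiplicative.ofAdd (1:ℤ))) ^ g.right.toAdd := by
    rw [← map_zpow]
    congr 1
    rw [← ofAdd_zsmul]
    simp
  rw [h1, map_zpow, map_zpow, rightHom_eq_right]

theorem stmt19' (U : (Matrix (Fin 2) (Fin 2) ℤ)ˣ)
    (hdet : (U : Matrix (Fin 2) (Fin 2) ℤ).det = 1)
    (htr : 2 < (U : Matrix (Fin 2) (Fin 2) ℤ).trace)
    (φ : GammaGrp U ≃* GammaGrp U) :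
    Cardinal.aleph0 ≤ Cardinal.mk (Quot (fun x y : GammaGrp U =>
      ∃ g : GammaGrp U, y = g * x * ((φ.toMonoidHom.comp φ.toMonoidHom) g)⁻¹)) := by
  set ψ : GammaGrp U →* GammaGrp U := φ.toMonoidHom.comp φ.toMonoidHom with hψ
  have h0φ : ∀ x, rightHom (φ.toMonoidHom (inl x)) = 1 := fun x =>
    hom_vanish_on_inl U hdet htr ((rightHom).comp φ.toMonoidHom) x
  have h0φ' : ∀ x, rightHom (φ.symm.toMonoidHom (inl x)) = 1 := fun x =>
    hom_vanish_on_inl U hdet htr ((rightHom).comp φ.symm.toMonoidHom) x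
  set t : GammaGrp U := inr (Multiplicative.ofAdd 1) with ht
  set ε : ℤ := (rightHom (φ.toMonoidHom t)).toAdd with hε
  have hmul : ε * (rightHom (φ.symm.toMonoidHom t)).toAdd = 1 := by
    have h1 := induced_rightHom U φ.toMonoidHom h0φ (φ.symm.toMonoidHom t)
    have h2 : φ.toMonoidHom (φ.symm.toMonoidHom t) = t := by simp
    rw [h2] at h1
    have h3 := congrArg Multiplicative.toAdd h1
    rw [toAdd_zpow, smul_eq_mul, ← ht] at h3
    have h4 : Multiplicative.toAdd (rightHom t) = 1 := by
      rw [ht, rightHom_inr]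
      rfl
    rw [h4] at h3
    rw [mul_comm] at h3
    exact h3.symm
  have hsq : ε * ε = 1 := by
    rcases Int.eq_one_or_neg_one_of_mul_eq_one hmul with h | h <;> rw [h] <;> ring
  have key : ∀ g, rightHom (ψ g) = rightHom g := by
    intro g
    have h1 := induced_rightHom U φ.toMonoidHom h0φ (φ.toMonoidHom g)
    have h2 := induced_rightHom U φ.toMonoidHom h0φ g
    apply Multiplicative.toAdd.injective
    have : rightHom (ψ g) = rightHom (φ.toMonoidHom (φ.toMonoidHom g)) := rfl
    rw [this, h1, h2]
    rw [toAdd_zpow, toAdd_zpow]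
    simp only [smul_eq_mul]
    rw [mul_assoc, hsq, mul_one]
  have wd : ∀ x y : GammaGrp U,
      (∃ g : GammaGrp U, y = g * x * (ψ g)⁻¹) →
      (rightHom x).toAdd = (rightHom y).toAdd := by
    rintro x y ⟨g, rfl⟩
    have h5 : rightHom (g * x * (ψ g)⁻¹) = rightHom x := by
      rw [map_mul, map_mul, map_inv, key, mul_comm (rightHom g), mul_assoc,
        mul_inv_cancel, mul_one]
    rw [h5]
  have hsurj : Function.Surjective
      (Quot.lift (fun g : GammaGrp U => (rightHom g).toAdd)
        (fun a b h => wd a b h) :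
        Quot (fun x y : GammaGrp U => ∃ g : GammaGrp U, y = g * x * (ψ g)⁻¹) → ℤ) := by
    intro n
    exact ⟨Quot.mk _ (inr (Multiplicative.ofAdd n)), by simp⟩
  calc Cardinal.aleph0 = Cardinal.mk ℤ := Cardinal.mk_int.symm
    _ ≤ _ := Cardinal.mk_le_of_surjective hsurj


/-- for `A ∈ SL(2,ℤ)` with `tr A > 2` and any automorphism `φ` of
`Γ_A = ℤ² ⋊_A ℤ`, the Reidemeister number of `φ ∘ φ` is infinite. -/
theorem stmt19 (U : (Matrix (Fin 2) (Fin 2) ℤ)ˣ)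
    (hdet : (U : Matrix (Fin 2) (Fin 2) ℤ).det = 1)
    (htr : 2 < (U : Matrix (Fin 2) (Fin 2) ℤ).trace)
    (φ : GammaGrp U ≃* GammaGrp U) :
    Cardinal.aleph0 ≤ reidemeisterNumber (φ.toMonoidHom.comp φ.toMonoidHom) := by
  exact stmt19' U hdet htr φ
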